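/- Let A be an L×N complex matrix all of whose columns have unit ℓ² norm, and let H be an N×P complex matrix with nonzero columns such that every column of H has at most s nonzero entries, all columns of AH are nonzero, and sμ(A) ≠ 1. Then the mutual coherence of AH satisfies μ(AH) ≤ ( μ(H) + s μ(A) ) / | 1 − s μ(A) |. -/

import Mathlib

open Matrix Finset Filter

noncomputable section

/-- A vector is `s`-sparse if it has at most `s` nonzero entries. -/
def sparse {n : Type*} (s : ℕ) (x : n → ℂ) : Prop := {i | x i ≠ 0}.ncard ≤ s

/-- The ℓ² norm of the `j`-th column of a matrix. -/
def colNorm {m n : Type*} [Fintype m] (A : Matrix m n ℂ) (j : n) : ℝ :=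
  Real.sqrt (∑ i, ‖A i j‖ ^ 2)

/-- The mutual coherence of a matrix:
`μ(A) = max_{j ≠ k} |⟨A_j, A_k⟩| / (‖A_j‖₂ ‖A_k‖₂)`. -/
def coherence {m n : Type*} [Fintype m] [Fintype n] (A : Matrix m n ℂ) : ℝ :=
  sSup {r : ℝ | ∃ j k, j ≠ k ∧ r = ‖(Aᴴ * A) j k‖ / (colNorm A j * colNorm A k)}

/-- The ℓ¹ norm of a vector. -/
def l1 {n : Type*} [Fintype n] (x : n → ℂ) : ℝ := ∑ i, ‖x i‖

/-- The ℓ^∞ norm of a vector. -/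
def linf {n : Type*} [Fintype n] (x : n → ℂ) : ℝ := ⨆ i, ‖x i‖

/-- The squared ℓ² norm of a vector. -/
def l2sq {n : Type*} [Fintype n] (x : n → ℂ) : ℝ := ∑ i, ‖x i‖ ^ 2

/-- The entrywise max norm of a matrix, `‖M‖_max = max_{i,j} |M_{ij}|`. -/
def maxNorm {m n : Type*} [Fintype m] [Fintype n] (A : Matrix m n ℂ) : ℝ :=
  ⨆ p : m × n, ‖A p.1 p.2‖

/-- The induced ℓ¹ matrix norm (maximum absolute column sum). -/
def matL1 {m n : Type*} [Fintype m] [Fintype n] (A : Matrix m n ℂ) : ℝ :=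
  ⨆ j, ∑ i, ‖A i j‖

/-- `x` is a hard thresholding `H_s(z)` of `z`: it agrees with `z` on an
index set `I` of size `s` consisting of entries of largest modulus, and
vanishes outside `I`. -/
def IsHardThreshold {n : Type*} [Fintype n] (s : ℕ) (z x : n → ℂ) : Prop :=
  ∃ I : Finset n, I.card = s ∧ (∀ i ∈ I, ∀ j ∉ I, ‖z j‖ ≤ ‖z i‖) ∧
    (∀ i ∈ I, x i = z i) ∧ (∀ i ∉ I, x i = 0)

/-- `A` satisfies the restricted isometry property of order `t` with constant `δ`. -/
def SatisfiesRIP {m n : Type*} [Fintype m] [Fintype n] (A : Matrix m n ℂ) (t : ℕ) (δ : ℝ) :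
    Prop :=
  0 < δ ∧ δ < 1 ∧ ∀ z : n → ℂ, sparse t z →
    (1 - δ) * l2sq z ≤ l2sq (A.mulVec z) ∧ l2sq (A.mulVec z) ≤ (1 + δ) * l2sq z

/-- The spectral (operator ℓ²) norm of a square matrix. -/
def specNorm {n : Type*} [Fintype n] [DecidableEq n] (M : Matrix n n ℂ) : ℝ :=
  ‖Matrix.toEuclideanCLM (𝕜 := ℂ) M‖


lemma coh_bddAbove {m n : Type*} [Fintype m] [Fintype n] (M : Matrix m n ℂ) :
    BddAbove {r : ℝ | ∃ j k, j ≠ k ∧ r = ‖(Mᴴ * M) j k‖ / (colNorm M j * colNorm M k)} := by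
  apply Set.Finite.bddAbove
  apply Set.Finite.subset (Set.finite_range
    (fun jk : n × n => ‖(Mᴴ * M) jk.1 jk.2‖ / (colNorm M jk.1 * colNorm M jk.2)))
  rintro r ⟨j, k, _, rfl⟩; exact ⟨(j, k), rfl⟩

lemma coherence_nonneg {m n : Type*} [Fintype m] [Fintype n] (M : Matrix m n ℂ) :
    0 ≤ coherence M := by
  apply Real.sSup_nonneg
  rintro r ⟨j, k, _, rfl⟩
  exact div_nonneg (norm_nonneg _) (mul_nonneg (Real.sqrt_nonneg _) (Real.sqrt_nonneg _))

lemma le_coherence {m n : Type*} [Fintype m] [Fintype n] (M : Matrix m n ℂ) {j k : n}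
    (h : j ≠ k) : ‖(Mᴴ * M) j k‖ / (colNorm M j * colNorm M k) ≤ coherence M :=
  le_csSup (coh_bddAbove M) ⟨j, k, h, rfl⟩

lemma coherence_le {m n : Type*} [Fintype m] [Fintype n] (M : Matrix m n ℂ) {B : ℝ}
    (hB : 0 ≤ B)
    (h : ∀ j k : n, j ≠ k → ‖(Mᴴ * M) j k‖ / (colNorm M j * colNorm M k) ≤ B) :
    coherence M ≤ B := by
  apply Real.sSup_le _ hB
  rintro r ⟨j, k, hjk, rfl⟩
  exact h j k hjk

lemma gram_apply {m n : Type*} [Fintype m] (M : Matrix m n ℂ) (j k : n) :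
    (Mᴴ * M) j k = ∑ i, (starRingEnd ℂ) (M i j) * M i k := by
  simp [Matrix.mul_apply, Matrix.conjTranspose_apply]

lemma colNorm_sq {m n : Type*} [Fintype m] (M : Matrix m n ℂ) (j : n) :
    colNorm M j ^ 2 = ∑ i, ‖M i j‖ ^ 2 :=
  Real.sq_sqrt (by positivity)

lemma gram_diag {m n : Type*} [Fintype m] (M : Matrix m n ℂ) (j : n) :
    (Mᴴ * M) j j = ((∑ i, ‖M i j‖ ^ 2 : ℝ) : ℂ) := by
  rw [_root_.gram_apply]
  push_cast
  congr 1
  ext i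
  rw [Complex.conj_mul']

lemma colNorm_pos {m n : Type*} [Fintype m] (M : Matrix m n ℂ) {j : n} (h : ∃ i, M i j ≠ 0) :
    0 < colNorm M j := by
  obtain ⟨i, hi⟩ := h
  apply Real.sqrt_pos.2
  apply Finset.sum_pos' (fun i _ => by positivity)
  exact ⟨i, Finset.mem_univ i, pow_pos (norm_pos_iff.2 hi) 2⟩


lemma l1_nonneg {n : Type*} [Fintype n] (x : n → ℂ) : 0 ≤ l1 x :=
  Finset.sum_nonneg fun i _ => norm_nonneg _

lemma l1_sq_le {n : Type*} [Fintype n] [DecidableEq n] {s : ℕ} {x : n → ℂ}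
    (hx : sparse s x) : l1 x ^ 2 ≤ (s : ℝ) * l2sq x := by
  classical
  set T : Finset n := Finset.univ.filter (fun i => x i ≠ 0) with hT
  have hcard : T.card ≤ s := by
    have : {i | x i ≠ 0}.ncard = T.card := by
      rw [Set.ncard_eq_toFinset_card']
      congr 1
      ext i
      simp [hT]
    unfold sparse at hx; rw [this] at hx; exact hx
  have hl1 : l1 x = ∑ i ∈ T, ‖x i‖ := by
    rw [l1, ← Finset.sum_filter_ne_zero]
    congr 1
    ext i
    simp [hT, norm_eq_zero]
  have hl2 : ∑ i ∈ T, ‖x i‖ ^ 2 ≤ l2sq x :=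
    Finset.sum_le_sum_of_subset_of_nonneg (Finset.subset_univ T) (fun i _ _ => by positivity)
  calc l1 x ^ 2 = (∑ i ∈ T, ‖x i‖) ^ 2 := by rw [hl1]
    _ ≤ T.card * ∑ i ∈ T, ‖x i‖ ^ 2 := sq_sum_le_card_mul_sum_sq
    _ ≤ (s : ℝ) * l2sq x := by
        apply mul_le_mul (by exact_mod_cast hcard) hl2 (by positivity) (by positivity)

lemma key_err {L N P : ℕ} (A : Matrix (Fin L) (Fin N) ℂ) (H : Matrix (Fin N) (Fin P) ℂ)
    (hA : ∀ j, colNorm A j = 1) (j k : Fin P) :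
    ‖((A * H)ᴴ * (A * H)) j k - (Hᴴ * H) j k‖ ≤
      coherence A * (l1 (fun i => H i j) * l1 (fun i => H i k)) := by
  classical
  set G := Aᴴ * A with hG
  have hGd : ∀ p, G p p = 1 := by
    intro p
    rw [hG, gram_diag]
    have h2 : (∑ i, ‖A i p‖ ^ 2) = 1 := by
      have h := colNorm_sq A p
      rw [hA p] at h; simpa using h.symm
    rw [h2]; norm_num
  have hGo : ∀ p q, p ≠ q → ‖G p q‖ ≤ coherence A := by
    intro p q hpq
    have h := le_coherence A hpq
    rwa [hA p, hA q, mul_one, div_one] at h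
  set f : Fin N → Fin N → ℂ := fun p q => (starRingEnd ℂ) (H p j) * G p q * H q k with hf
  have hexp : ((A * H)ᴴ * (A * H)) j k = ∑ p, ∑ q, f p q := by
    have : (A * H)ᴴ * (A * H) = Hᴴ * (G * H) := by
      rw [Matrix.conjTranspose_mul, hG, Matrix.mul_assoc, Matrix.mul_assoc]
    rw [this, Matrix.mul_apply]
    apply Finset.sum_congr rfl
    intro p _
    rw [Matrix.mul_apply, Finset.mul_sum]
    apply Finset.sum_congr rfl
    intro q _
    simp only [Matrix.conjTranspose_apply, hf, Complex.star_def]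
    ring
  have hHH : (Hᴴ * H) j k = ∑ p, f p p := by
    rw [_root_.gram_apply]
    apply Finset.sum_congr rfl
    intro p _
    rw [hf]; simp [hGd p]
  have hdiff : ((A * H)ᴴ * (A * H)) j k - (Hᴴ * H) j k
      = ∑ p, ∑ q ∈ Finset.univ.erase p, f p q := by
    rw [hexp, hHH, ← Finset.sum_sub_distrib]
    apply Finset.sum_congr rfl
    intro p _
    rw [← Finset.add_sum_erase _ _ (Finset.mem_univ p)]
    ring
  rw [hdiff]
  calc ‖∑ p, ∑ q ∈ Finset.univ.erase p, f p q‖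
      ≤ ∑ p, ∑ q ∈ Finset.univ.erase p, ‖f p q‖ :=
        (norm_sum_le _ _).trans (Finset.sum_le_sum fun p _ => norm_sum_le _ _)
    _ ≤ ∑ p, ∑ q ∈ Finset.univ.erase p, ‖H p j‖ * coherence A * ‖H q k‖ := by
        apply Finset.sum_le_sum
        intro p _
        apply Finset.sum_le_sum
        intro q hq
        have hpq : p ≠ q := (Finset.ne_of_mem_erase hq).symm
        rw [hf]
        calc ‖(starRingEnd ℂ) (H p j) * G p q * H q k‖
            = ‖H p j‖ * ‖G p q‖ * ‖H q k‖ := by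
              rw [norm_mul, norm_mul, RCLike.norm_conj]
          _ ≤ ‖H p j‖ * coherence A * ‖H q k‖ := by
              apply mul_le_mul_of_nonneg_right _ (norm_nonneg _)
              exact mul_le_mul_of_nonneg_left (hGo p q hpq) (norm_nonneg _)
    _ ≤ ∑ p, ∑ q, ‖H p j‖ * coherence A * ‖H q k‖ := by
        apply Finset.sum_le_sum
        intro p _
        apply Finset.sum_le_sum_of_subset_of_nonneg (Finset.erase_subset _ _)
        intro q _ _
        have := coherence_nonneg A
        positivity
    _ = coherence A * (l1 (fun i => H i j) * l1 (fun i => H i k)) := by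
        rw [l1, l1, Finset.sum_mul_sum]
        rw [Finset.mul_sum]
        apply Finset.sum_congr rfl
        intro p _
        rw [Finset.mul_sum]
        apply Finset.sum_congr rfl
        intro q _
        ring

lemma gram_norm_le {m n : Type*} [Fintype m] [Fintype n] (M : Matrix m n ℂ) (j k : n) :
    ‖(Mᴴ * M) j k‖ ≤ colNorm M j * colNorm M k := by
  let x : EuclideanSpace ℂ m := WithLp.toLp 2 (fun i => M i j)
  let y : EuclideanSpace ℂ m := WithLp.toLp 2 (fun i => M i k)
  have hin : (Mᴴ * M) j k = inner ℂ x y := by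
    rw [_root_.gram_apply, PiLp.inner_apply]
    apply Finset.sum_congr rfl
    intro i _
    rw [RCLike.inner_apply, mul_comm]
  have hx : ‖x‖ = colNorm M j := by rw [EuclideanSpace.norm_eq]; rfl
  have hy : ‖y‖ = colNorm M k := by rw [EuclideanSpace.norm_eq]; rfl
  rw [hin, ← hx, ← hy]
  exact norm_inner_le_norm x y


/-- Corollary 4.3: coherence of a matrix product with column-sparse right factor. -/
theorem coherence_mul_le_of_sparse_cols {L N P : ℕ} (s : ℕ)
    (A : Matrix (Fin L) (Fin N) ℂ) (H : Matrix (Fin N) (Fin P) ℂ)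
    (hA : ∀ j, colNorm A j = 1)
    (hH : ∀ j, ∃ i, H i j ≠ 0)
    (hHs : ∀ j, sparse s (fun i => H i j))
    (hAH : ∀ j, ∃ i, (A * H) i j ≠ 0)
    (hsμ : (s : ℝ) * coherence A ≠ 1) :
    coherence (A * H) ≤
      (coherence H + (s : ℝ) * coherence A) / |1 - (s : ℝ) * coherence A| := by
  classical
  set μA := coherence A with hμA
  set μH := coherence H with hμH
  have hμA0 : 0 ≤ μA := coherence_nonneg A
  have hμH0 : 0 ≤ μH := coherence_nonneg H
  set n_ : Fin P → ℝ := fun j => colNorm H j with hn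
  set c_ : Fin P → ℝ := fun j => colNorm (A * H) j with hc
  have hn0 : ∀ j, 0 < n_ j := fun j => colNorm_pos H (hH j)
  have hc0 : ∀ j, 0 < c_ j := fun j => colNorm_pos (A * H) (hAH j)
  -- l1-bound from sparsity
  have hl1 : ∀ j, l1 (fun i => H i j) ^ 2 ≤ (s : ℝ) * n_ j ^ 2 := by
    intro j
    have h0 := l1_sq_le (hHs j)
    have h2 : n_ j ^ 2 = l2sq fun i => H i j := colNorm_sq H j
    rw [h2]; exact h0
  have hl1' : ∀ j k, l1 (fun i => H i j) * l1 (fun i => H i k) ≤ (s : ℝ) * (n_ j * n_ k) := by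
    intro j k
    have hsq : (l1 (fun i => H i j) * l1 (fun i => H i k)) ^ 2
        ≤ ((s : ℝ) * (n_ j * n_ k)) ^ 2 := by
      calc (l1 (fun i => H i j) * l1 (fun i => H i k)) ^ 2
          = l1 (fun i => H i j) ^ 2 * l1 (fun i => H i k) ^ 2 := by ring
        _ ≤ ((s : ℝ) * n_ j ^ 2) * ((s : ℝ) * n_ k ^ 2) := by
            apply mul_le_mul (hl1 j) (hl1 k) (by positivity) (by positivity)
        _ = ((s : ℝ) * (n_ j * n_ k)) ^ 2 := by ring
    have h1 : 0 ≤ l1 (fun i => H i j) * l1 (fun i => H i k) :=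
      mul_nonneg (l1_nonneg _) (l1_nonneg _)
    have h2 : 0 ≤ (s : ℝ) * (n_ j * n_ k) := by
      have := (hn0 j).le; have := (hn0 k).le; positivity
    have := Real.sqrt_le_sqrt hsq
    rwa [Real.sqrt_sq h1, Real.sqrt_sq h2] at this
  -- numerator bound
  have hnum : ∀ j k, j ≠ k → ‖((A * H)ᴴ * (A * H)) j k‖ ≤ (μH + s * μA) * (n_ j * n_ k) := by
    intro j k hjk
    have hHjk : ‖(Hᴴ * H) j k‖ ≤ μH * (n_ j * n_ k) := by
      have h := le_coherence H hjk
      rw [div_le_iff₀ (by have := hn0 j; have := hn0 k; positivity)] at h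
      rw [← hμH] at h
      calc ‖(Hᴴ * H) j k‖ ≤ μH * (colNorm H j * colNorm H k) := h
        _ = μH * (n_ j * n_ k) := rfl
    calc ‖((A * H)ᴴ * (A * H)) j k‖
        ≤ ‖(Hᴴ * H) j k‖ + ‖((A * H)ᴴ * (A * H)) j k - (Hᴴ * H) j k‖ := by
          have := norm_add_le ((Hᴴ * H) j k) (((A * H)ᴴ * (A * H)) j k - (Hᴴ * H) j k)
          simpa using this
      _ ≤ μH * (n_ j * n_ k) + μA * (l1 (fun i => H i j) * l1 (fun i => H i k)) := by
          exact add_le_add hHjk (key_err A H hA j k)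
      _ ≤ μH * (n_ j * n_ k) + μA * ((s : ℝ) * (n_ j * n_ k)) := by
          exact add_le_add_right (mul_le_mul_of_nonneg_left (hl1' j k) hμA0) _
      _ = (μH + s * μA) * (n_ j * n_ k) := by ring
  -- denominator bound
  have hden : ∀ j, (1 - s * μA) * n_ j ^ 2 ≤ c_ j ^ 2 := by
    intro j
    have hDjj : (((A * H)ᴴ * (A * H)) j j : ℂ) = ((c_ j ^ 2 : ℝ) : ℂ) := by
      rw [gram_diag, hc, colNorm_sq]
    have hHjj : ((Hᴴ * H) j j : ℂ) = ((n_ j ^ 2 : ℝ) : ℂ) := by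
      rw [gram_diag, hn, colNorm_sq]
    have habs : |c_ j ^ 2 - n_ j ^ 2| ≤ μA * ((s : ℝ) * n_ j ^ 2) := by
      have h1 : ‖((A * H)ᴴ * (A * H)) j j - (Hᴴ * H) j j‖ = |c_ j ^ 2 - n_ j ^ 2| := by
        rw [hDjj, hHjj, ← Complex.ofReal_sub, Complex.norm_real, Real.norm_eq_abs]
      have h2 := key_err A H hA j j
      rw [h1] at h2
      exact h2.trans (by
        apply mul_le_mul_of_nonneg_left _ hμA0
        have := hl1' j j
        calc l1 (fun i => H i j) * l1 (fun i => H i j) ≤ (s:ℝ) * (n_ j * n_ j) := hl1' j j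
          _ = (s : ℝ) * n_ j ^ 2 := by ring)
    have := (abs_le.1 habs).1
    nlinarith [this]
  -- split on the sign of 1 - s μA
  have hne : (1 : ℝ) - s * μA ≠ 0 := fun h => hsμ (by linarith)
  have hnum0 : 0 ≤ μH + (s : ℝ) * μA := add_nonneg hμH0 (mul_nonneg (Nat.cast_nonneg s) hμA0)
  rcases hne.lt_or_gt with h1 | h1
  · -- s * μA > 1
    rw [abs_of_neg h1]
    have hc1 : coherence (A * H) ≤ 1 := by
      apply coherence_le (A * H) zero_le_one
      intro j k _
      rw [div_le_one (mul_pos (hc0 j) (hc0 k))]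
      exact gram_norm_le (A * H) j k
    refine hc1.trans ?_
    rw [le_div_iff₀ (by linarith)]
    linarith
  · -- s * μA < 1
    rw [abs_of_pos h1]
    apply coherence_le (A * H) (div_nonneg hnum0 h1.le)
    intro j k hjk
    rw [div_le_div_iff₀ (mul_pos (hc0 j) (hc0 k)) h1]
    have hcn : ∀ j, Real.sqrt (1 - s * μA) * n_ j ≤ c_ j := by
      intro j
      have h2 := Real.sqrt_le_sqrt (hden j)
      rwa [Real.sqrt_mul h1.le, Real.sqrt_sq (hn0 j).le, Real.sqrt_sq (hc0 j).le] at h2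
    have hck : (1 - s * μA) * (n_ j * n_ k) ≤ c_ j * c_ k := by
      have key : (Real.sqrt (1 - s * μA) * n_ j) * (Real.sqrt (1 - s * μA) * n_ k)
          ≤ c_ j * c_ k :=
        mul_le_mul (hcn j) (hcn k)
          (mul_nonneg (Real.sqrt_nonneg _) (hn0 k).le) (hc0 j).le
      calc (1 - s * μA) * (n_ j * n_ k)
          = (Real.sqrt (1 - s * μA) * n_ j) * (Real.sqrt (1 - s * μA) * n_ k) := by
            have hss : Real.sqrt (1 - s * μA) * Real.sqrt (1 - s * μA) = 1 - s * μA :=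
              Real.mul_self_sqrt h1.le
            linear_combination (-(n_ j * n_ k)) * hss
        _ ≤ c_ j * c_ k := key
    calc ‖((A * H)ᴴ * (A * H)) j k‖ * (1 - s * μA)
        ≤ ((μH + s * μA) * (n_ j * n_ k)) * (1 - s * μA) :=
          mul_le_mul_of_nonneg_right (hnum j k hjk) h1.le
      _ = (μH + s * μA) * ((1 - s * μA) * (n_ j * n_ k)) := by ring
      _ ≤ (μH + s * μA) * (c_ j * c_ k) := mul_le_mul_of_nonneg_left hck hnum0


end
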